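/- arXiv:1809.09809 — 2 statements merged into one kernel-verified Lean document; each statement's English description precedes it below -/
import Mathlib

section
/- The dual cone of the SOCP cone on the complete graph is the cone of sums of PSD 2×2 principal embeddings: for n ≥ 2, let C2 be the set of n×n complex Hermitian H with H_ii ≥ 0 for all i and H_ii·H_jj ≥ |H_ij|² for all i ≠ j. Then an n×n Hermitian matrix M satisfies tr(H M) ≥ 0 for all H ∈ C2 if and only if M can be written as M = Σ_{i<j} [e_i, e_j] A_{ij} [e_i, e_j]ᵀ, where for each pair i < j, A_{ij} is a 2×2 complex Hermitian positive semidefinite matrix and [e_i, e_j] is the n×2 matrix whose columns are the i-th and j-th standard basis vectors of ℝⁿ. -/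
open Matrix Finset
open scoped ComplexOrder

/-- The `n×n` matrix `[e_i, e_j] A [e_i, e_j]ᵀ` supported on the principal submatrix
indexed by `{i, j}`, with entries given by the `2×2` matrix `A`. -/
noncomputable def emb2 {n : ℕ} (i j : Fin n) (A : Matrix (Fin 2) (Fin 2) ℂ) :
    Matrix (Fin n) (Fin n) ℂ :=
  Matrix.single i i (A 0 0) + Matrix.single i j (A 0 1) +
    Matrix.single j i (A 1 0) + Matrix.single j j (A 1 1)

/-- The SOCP cone on the complete graph: Hermitian `H` with nonnegative diagonal and
`H_ii · H_jj ≥ |H_ij|²` for all `i ≠ j`. -/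
def SOCPConeFull (n : ℕ) : Set (Matrix (Fin n) (Fin n) ℂ) :=
  {H | H.IsHermitian ∧ (∀ i, 0 ≤ (H i i).re) ∧
    ∀ i j, i ≠ j → Complex.normSq (H i j) ≤ (H i i).re * (H j j).re}

open Filter
open scoped Topology

/-- positive semidefiniteness of a 2×2 hermitian matrix with given data -/
lemma psd2 (a b : ℝ) (c : ℂ) (ha : 0 ≤ a) (hb : 0 ≤ b) (h : Complex.normSq c ≤ a * b) :
    (Matrix.of ![![(a:ℂ), c], ![(starRingEnd ℂ) c, (b:ℂ)]]).PosSemidef := by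
  refine Matrix.PosSemidef.of_dotProduct_mulVec_nonneg ?_ ?_
  · ext i j
    fin_cases i <;> fin_cases j <;>
      simp [Matrix.conjTranspose_apply, Complex.conj_ofReal]
  · intro x
    have hval : star x ⬝ᵥ (Matrix.of ![![(a:ℂ), c], ![(starRingEnd ℂ) c, (b:ℂ)]]) *ᵥ x
        = (starRingEnd ℂ) (x 0) * ((a:ℂ) * x 0 + c * x 1)
          + (starRingEnd ℂ) (x 1) * ((starRingEnd ℂ) c * x 0 + (b:ℂ) * x 1) := by
      simp [dotProduct, Matrix.mulVec, Fin.sum_univ_two, Pi.star_apply,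
        RingHom.star_def]
    rw [hval, Complex.nonneg_iff]
    have h' : c.re^2 + c.im^2 ≤ a * b := by
      simpa [Complex.normSq_apply, sq] using h
    constructor
    · simp only [Complex.add_re, Complex.mul_re, Complex.mul_im, Complex.add_im,
        Complex.ofReal_re, Complex.ofReal_im, Complex.conj_re, Complex.conj_im]
      rcases hb.eq_or_lt with hb0 | hb0
      · have hcc : c.re^2 + c.im^2 ≤ 0 := by rw [← hb0] at h'; linarith
        have hcr : c.re = 0 := by nlinarith [sq_nonneg c.re, sq_nonneg c.im]
        have hci : c.im = 0 := by nlinarith [sq_nonneg c.re, sq_nonneg c.im]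
        rw [hcr, hci, ← hb0]
        nlinarith [sq_nonneg ((x 0).re), sq_nonneg ((x 0).im),
          mul_nonneg ha (sq_nonneg ((x 0).re)), mul_nonneg ha (sq_nonneg ((x 0).im))]
      · nlinarith [sq_nonneg (b*(x 1).re + (c.re*(x 0).re + c.im*(x 0).im)),
          sq_nonneg (b*(x 1).im + (c.re*(x 0).im - c.im*(x 0).re)),
          mul_nonneg (sub_nonneg.mpr h') (add_nonneg (sq_nonneg ((x 0).re)) (sq_nonneg ((x 0).im))),
          hb0]
    · simp only [Complex.add_re, Complex.mul_re, Complex.mul_im, Complex.add_im,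
        Complex.ofReal_re, Complex.ofReal_im, Complex.conj_re, Complex.conj_im]
      ring

/-- extraction of the scalar inequalities from a 2×2 PSD matrix -/
lemma psd2_inv {A : Matrix (Fin 2) (Fin 2) ℂ} (hA : A.PosSemidef) :
    0 ≤ (A 0 0).re ∧ 0 ≤ (A 1 1).re ∧
    Complex.normSq (A 0 1) ≤ (A 0 0).re * (A 1 1).re ∧
    A 1 0 = (starRingEnd ℂ) (A 0 1) ∧
    A 0 0 = ((A 0 0).re : ℂ) ∧ A 1 1 = ((A 1 1).re : ℂ) := by
  have herm := hA.1
  have h10 : A 1 0 = (starRingEnd ℂ) (A 0 1) := by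
    have := herm.apply 1 0
    rw [← this]
    simp [RingHom.star_def]
  have h00 : A 0 0 = ((A 0 0).re : ℂ) := by
    have h := herm.apply 0 0
    exact (Complex.conj_eq_iff_re.mp (by simpa [RingHom.star_def] using h)).symm
  have h11 : A 1 1 = ((A 1 1).re : ℂ) := by
    have h := herm.apply 1 1
    exact (Complex.conj_eq_iff_re.mp (by simpa [RingHom.star_def] using h)).symm
  have key : ∀ z w : ℂ, 0 ≤ ((starRingEnd ℂ) z * (A 0 0 * z + A 0 1 * w)
      + (starRingEnd ℂ) w * (A 1 0 * z + A 1 1 * w)).re := by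
    intro z w
    have hk := hA.dotProduct_mulVec_nonneg ![z, w]
    have hk2 : (0:ℂ) ≤ (starRingEnd ℂ) z * (A 0 0 * z + A 0 1 * w)
        + (starRingEnd ℂ) w * (A 1 0 * z + A 1 1 * w) := by
      have e : star ![z, w] ⬝ᵥ A *ᵥ ![z, w] = (starRingEnd ℂ) z * (A 0 0 * z + A 0 1 * w)
        + (starRingEnd ℂ) w * (A 1 0 * z + A 1 1 * w) := by
        simp [dotProduct, Matrix.mulVec, Fin.sum_univ_two, Pi.star_apply,
          RingHom.star_def]
      rwa [e] at hk
    exact (Complex.nonneg_iff.mp hk2).1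
  have ha : 0 ≤ (A 0 0).re := by
    have h := key 1 0
    rw [h00] at h
    simpa using h
  have hb : 0 ≤ (A 1 1).re := by
    have h := key 0 1
    rw [h11] at h
    simpa using h
  refine ⟨ha, hb, ?_, h10, h00, h11⟩
  have hnsq : Complex.normSq (A 0 1) = (A 0 1).re^2 + (A 0 1).im^2 := by
    rw [Complex.normSq_apply]; ring
  rcases hb.eq_or_lt with hb0 | hb0
  · -- (A 1 1).re = 0 : show A 0 1 = 0
    by_contra hlt
    push_neg at hlt
    have hcpos : 0 < Complex.normSq (A 0 1) := by
      rcases (Complex.normSq_nonneg (A 0 1)).eq_or_lt with h0 | h0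
      · rw [← h0] at hlt; nlinarith [mul_nonneg ha hb]
      · exact h0
    set t : ℝ := ((A 0 0).re + 1) / (2 * Complex.normSq (A 0 1)) with hts
    have h := key 1 (-(t:ℂ) * (starRingEnd ℂ) (A 0 1))
    rw [h00, h10, h11, ← hb0] at h
    simp only [Complex.mul_re, Complex.add_re, Complex.mul_im, Complex.add_im,
      Complex.conj_re, Complex.conj_im, Complex.ofReal_re, Complex.ofReal_im,
      Complex.neg_re, Complex.neg_im, Complex.one_re, Complex.one_im] at h
    rw [hts] at h
    have h2 : ((A 0 0).re + 1) / (2 * Complex.normSq (A 0 1)) * Complex.normSq (A 0 1)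
        = ((A 0 0).re + 1) / 2 := by
      field_simp
    nlinarith [h, hcpos, hnsq, h2]
  · -- (A 1 1).re > 0
    have h := key (((A 1 1).re : ℂ)) (-(starRingEnd ℂ) (A 0 1))
    rw [h00, h10, h11] at h
    simp only [Complex.mul_re, Complex.add_re, Complex.mul_im, Complex.add_im,
      Complex.conj_re, Complex.conj_im, Complex.ofReal_re, Complex.ofReal_im,
      Complex.neg_re, Complex.neg_im] at h
    nlinarith [h, hb0, hnsq]

lemma trace_mul_std {n : ℕ} (H : Matrix (Fin n) (Fin n) ℂ) (i j : Fin n) (c : ℂ) :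
    (H * Matrix.single i j c).trace = c * H j i := by
  simp only [Matrix.trace, Matrix.diag, Matrix.mul_apply, Matrix.single,
    Matrix.of_apply, ite_and, mul_ite, mul_zero]
  rw [Finset.sum_comm]
  simp [Finset.sum_ite_eq, mul_comm]

lemma trace_mul_emb2 {n : ℕ} (H : Matrix (Fin n) (Fin n) ℂ) (i j : Fin n)
    (A : Matrix (Fin 2) (Fin 2) ℂ) :
    (H * emb2 i j A).trace = A 0 0 * H i i + A 0 1 * H j i + A 1 0 * H i j + A 1 1 * H j j := by
  simp only [emb2, Matrix.mul_add, Matrix.trace_add, trace_mul_std]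

lemma sum_emb2_entry {n : ℕ} (A : Fin n → Fin n → Matrix (Fin 2) (Fin 2) ℂ) (k l : Fin n) :
    (∑ p ∈ Finset.univ.filter (fun p : Fin n × Fin n => p.1 < p.2),
        emb2 p.1 p.2 (A p.1 p.2)) k l
    = if k < l then A k l 0 1 else if l < k then A l k 1 0
      else (∑ j ∈ Finset.univ.filter (fun j => k < j), A k j 0 0)
         + (∑ i ∈ Finset.univ.filter (fun i => i < k), A i k 1 1) := by
  classical
  rw [Matrix.sum_apply]
  rcases lt_trichotomy k l with hkl | hkl | hkl
  · rw [if_pos hkl]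
    rw [Finset.sum_eq_single_of_mem (k, l)
      (Finset.mem_filter.mpr ⟨Finset.mem_univ _, hkl⟩)]
    · simp [emb2, Matrix.single, Matrix.of_apply, hkl.ne, hkl.ne']
    · rintro ⟨a, b⟩ hab hne
      have hab' : a < b := (Finset.mem_filter.mp hab).2
      simp only [emb2, Matrix.add_apply, Matrix.single, Matrix.of_apply]
      have h1 : ¬(a = k ∧ a = l) := by rintro ⟨rfl, rfl⟩; exact absurd rfl hkl.ne
      have h2 : ¬(a = k ∧ b = l) := by rintro ⟨rfl, rfl⟩; exact hne rfl
      have h3 : ¬(b = k ∧ a = l) := by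
        rintro ⟨rfl, rfl⟩; exact absurd hab' (lt_asymm hkl)
      have h4 : ¬(b = k ∧ b = l) := by rintro ⟨rfl, rfl⟩; exact absurd rfl hkl.ne
      rw [if_neg h1, if_neg h2, if_neg h3, if_neg h4]
      simp
  · subst hkl
    rw [if_neg (lt_irrefl k), if_neg (lt_irrefl k)]
    have step : ∀ p ∈ Finset.univ.filter (fun p : Fin n × Fin n => p.1 < p.2),
        emb2 p.1 p.2 (A p.1 p.2) k k
        = (if p.1 = k then A p.1 p.2 0 0 else 0) + (if p.2 = k then A p.1 p.2 1 1 else 0) := by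
      rintro ⟨a, b⟩ hab
      have hab' : a < b := (Finset.mem_filter.mp hab).2
      simp only [emb2, Matrix.add_apply, Matrix.single, Matrix.of_apply]
      have h2 : ¬(a = k ∧ b = k) := by rintro ⟨rfl, rfl⟩; exact absurd hab' (lt_irrefl _)
      have h3 : ¬(b = k ∧ a = k) := by rintro ⟨rfl, rfl⟩; exact absurd hab' (lt_irrefl _)
      rw [if_neg h2, if_neg h3]
      simp only [and_self, add_zero, zero_add]
    rw [Finset.sum_congr rfl step, Finset.sum_add_distrib]
    congr 1
    · rw [Finset.sum_filter, Fintype.sum_prod_type, Finset.sum_filter]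
      have e : ∀ a : Fin n, (∑ b, if a < b then (if a = k then A a b 0 0 else 0) else 0)
          = if a = k then (∑ b, if a < b then A a b 0 0 else 0) else 0 := by
        intro a
        by_cases hak : a = k
        · simp [hak]
        · simp [hak]
      rw [Finset.sum_congr rfl (fun a _ => e a), Finset.sum_ite_eq' Finset.univ k]
      simp
    · rw [Finset.sum_filter, Fintype.sum_prod_type, Finset.sum_filter]
      have e : ∀ a : Fin n, (∑ b, if a < b then (if b = k then A a b 1 1 else 0) else 0)
          = if a < k then A a k 1 1 else 0 := by
        intro a
        have e2 : ∀ b : Fin n, (if a < b then (if b = k then A a b 1 1 else 0) else 0)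
            = if b = k then (if a < b then A a b 1 1 else 0) else 0 := by
          intro b
          by_cases h : b = k <;> by_cases h2 : a < b <;> simp [h, h2]
        rw [Finset.sum_congr rfl (fun b _ => e2 b), Finset.sum_ite_eq' Finset.univ k]
        simp
      rw [Finset.sum_congr rfl (fun a _ => e a)]
  · rw [if_neg (lt_asymm hkl), if_pos hkl]
    rw [Finset.sum_eq_single_of_mem (l, k)
      (Finset.mem_filter.mpr ⟨Finset.mem_univ _, hkl⟩)]
    · simp [emb2, Matrix.single, Matrix.of_apply, hkl.ne, hkl.ne']
    · rintro ⟨a, b⟩ hab hne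
      have hab' : a < b := (Finset.mem_filter.mp hab).2
      simp only [emb2, Matrix.add_apply, Matrix.single, Matrix.of_apply]
      have h1 : ¬(a = k ∧ a = l) := by rintro ⟨rfl, rfl⟩; exact absurd rfl hkl.ne'
      have h2 : ¬(a = k ∧ b = l) := by
        rintro ⟨rfl, rfl⟩; exact absurd hab' (lt_asymm hkl)
      have h3 : ¬(b = k ∧ a = l) := by rintro ⟨rfl, rfl⟩; exact hne rfl
      have h4 : ¬(b = k ∧ b = l) := by rintro ⟨rfl, rfl⟩; exact absurd rfl hkl.ne'
      rw [if_neg h1, if_neg h2, if_neg h3, if_neg h4]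
      simp

lemma core_eps {n : ℕ} (hn : 2 ≤ n) (N : Fin n → Fin n → ℝ)
    (hsym : ∀ i j, N j i = N i j) (hz : ∀ i j, i ≠ j → N i j ≤ 0)
    (hcop : ∀ s : Fin n → ℝ, (∀ i, 0 ≤ s i) → 0 ≤ ∑ i, ∑ j, s i * s j * N i j)
    {ε : ℝ} (hε : 0 < ε) :
    ∃ d : Fin n → Fin n → ℝ, (∀ i j, 0 ≤ d i j) ∧ (∀ i, d i i = 0) ∧
      (∀ i, ∑ j ∈ Finset.univ.erase i, d i j = N i i + ε) ∧
      (∀ i j, i ≠ j → N i j ^ 2 ≤ d i j * d j i) := by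
  classical
  have hnR : (2:ℝ) ≤ (n:ℝ) := by exact_mod_cast hn
  have hnpos : (0:ℝ) < n := by linarith
  set N' : Fin n → Fin n → ℝ := fun i j => N i j + if i = j then ε else 0 with hN'
  have hsym' : ∀ i j, N' j i = N' i j := by
    intro i j
    simp only [hN', hsym i j]
    by_cases h : i = j
    · simp [h]
    · simp [h, Ne.symm h]
  set q : (Fin n → ℝ) → ℝ := fun x => ∑ i, ∑ j, x i * x j * N' i j with hq
  have hqcont : Continuous q := by
    apply continuous_finset_sum
    intro i _
    apply continuous_finset_sum
    intro j _
    exact ((continuous_apply i).mul (continuous_apply j)).mul continuous_const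
  have hne : (stdSimplex ℝ (Fin n)).Nonempty := by
    refine ⟨fun _ => (n:ℝ)⁻¹, fun _ => by positivity, ?_⟩
    simp [Finset.sum_const, Finset.card_univ]
    field_simp
  obtain ⟨x₀, hx₀, hmin⟩ :=
    (isCompact_stdSimplex ℝ (Fin n)).exists_isMinOn hne hqcont.continuousOn
  have hx₀nn : ∀ i, 0 ≤ x₀ i := hx₀.1
  have hx₀sum : ∑ i, x₀ i = 1 := hx₀.2
  -- split q into the N part and the ε part
  have hsplit : ∀ x : Fin n → ℝ, q x = (∑ i, ∑ j, x i * x j * N i j) + ε * ∑ i, (x i)^2 := by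
    intro x
    have row : ∀ i : Fin n, ∑ j, x i * x j * N' i j
        = (∑ j, x i * x j * N i j) + ε * (x i)^2 := by
      intro i
      have e : ∀ j : Fin n, x i * x j * N' i j
          = x i * x j * N i j + (if i = j then x i * x j * ε else 0) := by
        intro j
        simp only [hN']
        by_cases h : i = j <;> simp [h] <;> ring
      rw [Finset.sum_congr rfl (fun j _ => e j), Finset.sum_add_distrib, Finset.sum_ite_eq]
      simp [sq]
      ring
    simp only [hq]
    rw [Finset.sum_congr rfl (fun i _ => row i), Finset.sum_add_distrib, ← Finset.mul_sum]
  have hlampos : 0 < q x₀ := by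
    have h1 : 0 ≤ ∑ i, ∑ j, x₀ i * x₀ j * N i j := hcop x₀ hx₀nn
    have h2 : (∑ i, x₀ i)^2 ≤ (Finset.univ.card : ℝ) * ∑ i, (x₀ i)^2 :=
      sq_sum_le_card_mul_sum_sq
    rw [hx₀sum] at h2
    simp only [Finset.card_univ, Fintype.card_fin] at h2
    have h3 : 0 < ∑ i, (x₀ i)^2 := by nlinarith
    rw [hsplit]
    nlinarith
  -- first-order condition at the minimizer
  have hfo : ∀ i, q x₀ ≤ ∑ j, x₀ j * N' i j := by
    intro i
    by_contra hlt
    push_neg at hlt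
    set u : ℝ := ∑ j, x₀ j * N' i j with hu
    set lam : ℝ := q x₀ with hlam
    set B : ℝ := lam + N' i i - 2*u with hB
    set t : ℝ := min 1 ((lam - u)/(|B|+1)) with ht
    have hBpos : (0:ℝ) < |B| + 1 := by positivity
    have htpos : 0 < t := by
      apply lt_min one_pos
      apply div_pos (by linarith) hBpos
    have htle1 : t ≤ 1 := min_le_left _ _
    have htle : t ≤ (lam - u)/(|B|+1) := min_le_right _ _
    set δ : Fin n → ℝ := fun a => if a = i then 1 else 0 with hδ
    set y : Fin n → ℝ := fun a => (1-t) * x₀ a + t * δ a with hy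
    have hymem : y ∈ stdSimplex ℝ (Fin n) := by
      constructor
      · intro a
        apply add_nonneg
        · exact mul_nonneg (by linarith) (hx₀nn a)
        · apply mul_nonneg htpos.le
          simp only [hδ]
          split <;> norm_num
      · simp only [hy]
        rw [Finset.sum_add_distrib, ← Finset.mul_sum, ← Finset.mul_sum, hx₀sum]
        simp only [hδ, Finset.sum_ite_eq', Finset.mem_univ, if_pos]
        ring
    have hexpand : q y = (1-t)^2 * lam + 2*(t*(1-t)) * u + t^2 * N' i i := by
      have key : ∀ a, ∑ b, y a * y b * N' a b
          = (1-t)^2 * (∑ b, x₀ a * x₀ b * N' a b)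
            + (t*(1-t)) * (δ a * ∑ b, x₀ b * N' a b)
            + (t*(1-t)) * (x₀ a * N' a i)
            + t^2 * (δ a * N' a i) := by
        intro a
        have expand : ∀ b, y a * y b * N' a b
            = (1-t)^2 * (x₀ a * x₀ b * N' a b)
              + (t*(1-t)) * (δ a * (x₀ b * N' a b))
              + (t*(1-t)) * (x₀ a * (δ b * N' a b))
              + t^2 * (δ a * (δ b * N' a b)) := by
          intro b
          simp only [hy]
          ring
        rw [Finset.sum_congr rfl (fun b _ => expand b)]
        rw [Finset.sum_add_distrib, Finset.sum_add_distrib, Finset.sum_add_distrib]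
        simp only [← Finset.mul_sum]
        have e1 : ∑ b, δ b * N' a b = N' a i := by
          simp only [hδ, ite_mul, one_mul, zero_mul, Finset.sum_ite_eq', Finset.mem_univ, if_pos]
        rw [e1]
      calc q y = ∑ a, ∑ b, y a * y b * N' a b := rfl
        _ = ∑ a, ((1-t)^2 * (∑ b, x₀ a * x₀ b * N' a b)
            + (t*(1-t)) * (δ a * ∑ b, x₀ b * N' a b)
            + (t*(1-t)) * (x₀ a * N' a i)
            + t^2 * (δ a * N' a i)) := Finset.sum_congr rfl (fun a _ => key a)
        _ = (1-t)^2 * lam + 2*(t*(1-t)) * u + t^2 * N' i i := by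
            rw [Finset.sum_add_distrib, Finset.sum_add_distrib, Finset.sum_add_distrib]
            simp only [← Finset.mul_sum]
            have e3 : ∑ a, δ a * (∑ b, x₀ b * N' a b) = u := by
              simp only [hδ, ite_mul, one_mul, zero_mul, Finset.sum_ite_eq', Finset.mem_univ,
                if_pos]
              exact hu.symm
            have e4 : ∑ a, δ a * N' a i = N' i i := by
              simp only [hδ, ite_mul, one_mul, zero_mul, Finset.sum_ite_eq', Finset.mem_univ,
                if_pos]
            have e5 : ∑ a, x₀ a * N' a i = u := by
              rw [hu]
              refine Finset.sum_congr rfl fun a _ => ?_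
              rw [hsym' a i]
            rw [e3, e4, e5]
            simp only [hlam, hq]
            ring
    have hyge : lam ≤ q y := hmin hymem
    rw [hexpand] at hyge
    have h6 : 0 ≤ t * (t * B + 2*(u - lam)) := by nlinarith [hyge]
    have h7 : 0 ≤ t * B + 2*(u - lam) := nonneg_of_mul_nonneg_right h6 htpos
    have h8 : t * B ≤ t * |B| := mul_le_mul_of_nonneg_left (le_abs_self B) htpos.le
    have h9 : t * |B| ≤ ((lam - u)/(|B|+1)) * |B| :=
      mul_le_mul_of_nonneg_right htle (abs_nonneg B)
    have h10 : ((lam - u)/(|B|+1)) * |B| < lam - u := by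
      rw [div_mul_eq_mul_div, div_lt_iff₀ hBpos]
      nlinarith [abs_nonneg B]
    linarith
  -- build a strictly positive vector with positive "row sums"
  set S : ℝ := ∑ i, ∑ j, |N' i j| with hS
  have hS0 : 0 ≤ S := Finset.sum_nonneg fun i _ => Finset.sum_nonneg fun j _ => abs_nonneg _
  set lam : ℝ := q x₀ with hlam
  set δ' : ℝ := lam / (1 + S) with hδ'
  have hδ'pos : 0 < δ' := div_pos hlampos (by linarith)
  set x : Fin n → ℝ := fun a => x₀ a + δ' with hx
  have hxpos : ∀ a, 0 < x a := fun a => by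
    have := hx₀nn a
    simp only [hx]
    linarith
  set v : Fin n → ℝ := fun i => ∑ j, x j * N' i j with hv
  have hvpos : ∀ i, δ' ≤ v i := by
    intro i
    have hrow : ∑ j, |N' i j| ≤ S := by
      apply Finset.single_le_sum (f := fun i => ∑ j, |N' i j|)
        (fun i _ => Finset.sum_nonneg fun j _ => abs_nonneg _) (Finset.mem_univ i)
    have hlow : -S ≤ ∑ j, N' i j := by
      have h := Finset.sum_le_sum (s := Finset.univ) (fun j _ => neg_abs_le (N' i j))
      rw [Finset.sum_neg_distrib] at h
      linarith
    have hvi : v i = (∑ j, x₀ j * N' i j) + δ' * ∑ j, N' i j := by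
      simp only [hv, hx, add_mul]
      rw [Finset.sum_add_distrib, Finset.mul_sum]
    have hδeq : δ' * (1 + S) = lam := by
      rw [hδ']
      field_simp
    have h1 : lam ≤ ∑ j, x₀ j * N' i j := hfo i
    have h2 : -δ' * S ≤ δ' * ∑ j, N' i j := by
      have := mul_le_mul_of_nonneg_left hlow hδ'pos.le
      nlinarith
    rw [hvi]
    nlinarith
  -- define d
  set d : Fin n → Fin n → ℝ :=
    fun i j => if i = j then 0 else (-N i j) * x j / x i + v i / (x i * ((n:ℝ) - 1)) with hd
  have hn1 : (0:ℝ) < (n:ℝ) - 1 := by linarith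
  have hdnn : ∀ i j, 0 ≤ d i j := by
    intro i j
    simp only [hd]
    split
    · exact le_refl 0
    · apply add_nonneg
      · apply div_nonneg _ (hxpos i).le
        exact mul_nonneg (by linarith [hz i j (by assumption)]) (hxpos j).le
      · apply div_nonneg (by linarith [hvpos i]) (mul_nonneg (hxpos i).le hn1.le)
  refine ⟨d, hdnn, fun i => by simp [hd], ?_, ?_⟩
  · intro i
    have hcard : ((Finset.univ.erase i).card : ℝ) = (n:ℝ) - 1 := by
      rw [Finset.card_erase_of_mem (Finset.mem_univ i), Finset.card_univ, Fintype.card_fin]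
      have : 1 ≤ n := by omega
      push_cast [Nat.cast_sub this]
      ring
    have hstep : ∀ j ∈ Finset.univ.erase i,
        d i j = (-N i j) * x j / x i + v i / (x i * ((n:ℝ) - 1)) := by
      intro j hj
      have : i ≠ j := (Finset.ne_of_mem_erase hj).symm
      simp [hd, this]
    have hsum1 : ∑ j ∈ Finset.univ.erase i, x j * N i j = v i - x i * (N i i + ε) := by
      have h1 : ∑ j ∈ Finset.univ.erase i, x j * N' i j + x i * N' i i = v i := by
        exact Finset.sum_erase_add Finset.univ (fun j => x j * N' i j) (Finset.mem_univ i)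
      have h2 : ∀ j ∈ Finset.univ.erase i, x j * N' i j = x j * N i j := by
        intro j hj
        have hji : j ≠ i := Finset.ne_of_mem_erase hj
        simp [hN', if_neg (Ne.symm hji)]
      have h3 : N' i i = N i i + ε := by simp [hN']
      rw [Finset.sum_congr rfl h2, h3] at h1
      linarith
    have hxne : x i ≠ 0 := (hxpos i).ne'
    have hne1 : ((n:ℝ) - 1) ≠ 0 := hn1.ne'
    rw [Finset.sum_congr rfl hstep, Finset.sum_add_distrib, Finset.sum_const, nsmul_eq_mul,
      hcard]
    have hdiv : ∑ j ∈ Finset.univ.erase i, (-N i j) * x j / x i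
        = (x i * (N i i + ε) - v i) / x i := by
      rw [← Finset.sum_div]
      congr 1
      have e : ∀ j, (-N i j) * x j = -(x j * N i j) := fun j => by ring
      rw [Finset.sum_congr rfl (fun j _ => e j), Finset.sum_neg_distrib, hsum1]
      ring
    rw [hdiv]
    have e2 : ((n:ℝ)-1) * (v i / (x i * ((n:ℝ)-1))) = v i / x i := by
      rw [← div_div, mul_comm, div_mul_cancel₀ _ hne1]
    rw [e2]
    have e3 : (x i * (N i i + ε) - v i) + v i = x i * (N i i + ε) := by ring
    rw [← add_div, e3, mul_div_cancel_left₀ _ hxne]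
  · intro i j hij
    have t1 : 0 ≤ (-N i j) * x j / x i :=
      div_nonneg (mul_nonneg (by linarith [hz i j hij]) (hxpos j).le) (hxpos i).le
    have t2 : 0 ≤ (-N j i) * x i / x j :=
      div_nonneg (mul_nonneg (by linarith [hz j i (Ne.symm hij)]) (hxpos i).le) (hxpos j).le
    have hprod : ((-N i j) * x j / x i) * ((-N j i) * x i / x j) = N i j ^ 2 := by
      rw [hsym i j, div_mul_div_comm,
        show (-N i j * x j) * (-N i j * x i) = N i j ^ 2 * (x i * x j) by ring]
      exact mul_div_cancel_right₀ _ (mul_ne_zero (hxpos i).ne' (hxpos j).ne')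
    have hd1 : (-N i j) * x j / x i ≤ d i j := by
      simp only [hd, if_neg hij]
      have : 0 ≤ v i / (x i * ((n:ℝ) - 1)) :=
        div_nonneg (by linarith [hvpos i]) (mul_nonneg (hxpos i).le hn1.le)
      linarith
    have hd2 : (-N j i) * x i / x j ≤ d j i := by
      simp only [hd, if_neg (Ne.symm hij)]
      have : 0 ≤ v j / (x j * ((n:ℝ) - 1)) :=
        div_nonneg (by linarith [hvpos j]) (mul_nonneg (hxpos j).le hn1.le)
      linarith
    calc N i j ^ 2 = ((-N i j) * x j / x i) * ((-N j i) * x i / x j) := hprod.symm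
      _ ≤ d i j * d j i := mul_le_mul hd1 hd2 t2 (le_trans t1 hd1)

lemma core {n : ℕ} (hn : 2 ≤ n) (N : Fin n → Fin n → ℝ)
    (hsym : ∀ i j, N j i = N i j) (hz : ∀ i j, i ≠ j → N i j ≤ 0)
    (hcop : ∀ s : Fin n → ℝ, (∀ i, 0 ≤ s i) → 0 ≤ ∑ i, ∑ j, s i * s j * N i j) :
    ∃ d : Fin n → Fin n → ℝ, (∀ i j, 0 ≤ d i j) ∧
      (∀ i, ∑ j ∈ Finset.univ.erase i, d i j = N i i) ∧
      (∀ i j, i ≠ j → N i j ^ 2 ≤ d i j * d j i) := by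
  classical
  have hNnn : ∀ i, 0 ≤ N i i := by
    intro i
    have h := hcop (fun a => if a = i then 1 else 0) (by intro a; split <;> norm_num)
    simpa [ite_mul, mul_ite, Finset.sum_ite_eq', Finset.mem_univ] using h
  set B : ℝ := (∑ i, N i i) + 1 with hB
  have hNB : ∀ i, N i i + 1 ≤ B := by
    intro i
    have := Finset.single_le_sum (f := fun i => N i i) (fun i _ => hNnn i) (Finset.mem_univ i)
    simp only [hB]
    linarith
  have hB0 : 0 ≤ B := by
    have := hNnn
    have : 0 ≤ ∑ i, N i i := Finset.sum_nonneg fun i _ => hNnn i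
    linarith
  have hseq : ∀ k : ℕ, ∃ d : Fin n → Fin n → ℝ,
      (∀ i j, 0 ≤ d i j) ∧ (∀ i, d i i = 0) ∧
      (∀ i, ∑ j ∈ Finset.univ.erase i, d i j = N i i + 1/((k:ℝ)+1)) ∧
      (∀ i j, i ≠ j → N i j ^ 2 ≤ d i j * d j i) :=
    fun k => core_eps hn N hsym hz hcop (by positivity)
  choose ds h1 h2 h3 h4 using hseq
  have hmem : ∀ k, ds k ∈ Set.univ.pi (fun _ : Fin n =>
      Set.univ.pi fun _ : Fin n => Set.Icc (0:ℝ) B) := by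
    intro k
    rw [Set.mem_univ_pi]
    intro i
    rw [Set.mem_univ_pi]
    intro j
    refine ⟨h1 k i j, ?_⟩
    by_cases hij : i = j
    · rw [hij, h2 k j]; exact hB0
    · have hjm : j ∈ Finset.univ.erase i := Finset.mem_erase.mpr ⟨Ne.symm hij, Finset.mem_univ j⟩
      have hle : ds k i j ≤ ∑ j' ∈ Finset.univ.erase i, ds k i j' :=
        Finset.single_le_sum (fun j' _ => h1 k i j') hjm
      have hk1 : 1/((k:ℝ)+1) ≤ 1 := by
        rw [div_le_one (by positivity)]
        simp
      have := h3 k i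
      calc ds k i j ≤ N i i + 1/((k:ℝ)+1) := by rw [← this]; exact hle
        _ ≤ N i i + 1 := by linarith
        _ ≤ B := hNB i
  have hcompact : IsCompact (Set.univ.pi (fun _ : Fin n =>
      Set.univ.pi fun _ : Fin n => Set.Icc (0:ℝ) B)) :=
    isCompact_univ_pi fun _ => isCompact_univ_pi fun _ => isCompact_Icc
  obtain ⟨d, hdmem, φ, hφ, hconv⟩ := hcompact.tendsto_subseq hmem
  have hcoord : ∀ i j, Tendsto (fun k => ds (φ k) i j) atTop (𝓝 (d i j)) := by
    intro i j
    have h := tendsto_pi_nhds.mp hconv i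
    exact tendsto_pi_nhds.mp h j
  refine ⟨d, ?_, ?_, ?_⟩
  · intro i j
    exact ge_of_tendsto' (hcoord i j) (fun k => h1 (φ k) i j)
  · intro i
    have hsum : Tendsto (fun k => ∑ j ∈ Finset.univ.erase i, ds (φ k) i j) atTop
        (𝓝 (∑ j ∈ Finset.univ.erase i, d i j)) :=
      tendsto_finset_sum _ (fun j _ => hcoord i j)
    have heq : (fun k => ∑ j ∈ Finset.univ.erase i, ds (φ k) i j)
        = fun k => N i i + 1/((φ k : ℝ)+1) := by
      funext k
      exact h3 (φ k) i
    rw [heq] at hsum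
    have hlim : Tendsto (fun k => N i i + 1/((φ k : ℝ)+1)) atTop (𝓝 (N i i)) := by
      have h0 : Tendsto (fun k : ℕ => 1/((φ k : ℝ)+1)) atTop (𝓝 0) :=
        tendsto_one_div_add_atTop_nhds_zero_nat.comp hφ.tendsto_atTop
      simpa using tendsto_const_nhds.add h0
    exact tendsto_nhds_unique hsum hlim
  · intro i j hij
    exact ge_of_tendsto' ((hcoord i j).mul (hcoord j i)) (fun k => h4 (φ k) i j hij)
/-- The dual cone of the SOCP cone on the complete graph is exactly the cone of sums of
positive semidefinite `2×2` principal embeddings. -/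
theorem dualCone_SOCPConeFull (n : ℕ) (hn : 2 ≤ n)
    (M : Matrix (Fin n) (Fin n) ℂ) (hM : M.IsHermitian) :
    (∀ H ∈ SOCPConeFull n, 0 ≤ ((H * M).trace).re) ↔
      ∃ A : Fin n → Fin n → Matrix (Fin 2) (Fin 2) ℂ,
        (∀ i j : Fin n, i < j → (A i j).IsHermitian ∧ (A i j).PosSemidef) ∧
        M = ∑ p ∈ Finset.univ.filter (fun p : Fin n × Fin n => p.1 < p.2),
              emb2 p.1 p.2 (A p.1 p.2) := by
  constructor
  · intro hdual
    set N : Fin n → Fin n → ℝ :=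
      fun i j => if i = j then (M i i).re else -‖(M i j)‖ with hN
    have hMc : ∀ k l, M k l = (starRingEnd ℂ) (M l k) := by
      intro k l
      rw [← hM.apply k l]; simp [RingHom.star_def]
    have habs : ∀ k l, ‖(M l k)‖ = ‖(M k l)‖ := by
      intro k l
      rw [hMc l k, Complex.norm_conj]
    have hsym : ∀ i j, N j i = N i j := by
      intro i j
      by_cases h : i = j
      · rw [h]
      · simp only [hN, if_neg h, if_neg (Ne.symm h), habs]
    have hz : ∀ i j, i ≠ j → N i j ≤ 0 := by
      intro i j h
      simp only [hN, if_neg h]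
      simp [norm_nonneg]
    have hcop : ∀ s : Fin n → ℝ, (∀ i, 0 ≤ s i) → 0 ≤ ∑ i, ∑ j, s i * s j * N i j := by
      intro s hs
      set u : Fin n → Fin n → ℂ :=
        fun k l => if M k l = 0 then 0 else M k l / ((‖(M k l)‖ : ℝ) : ℂ) with hu
      set H : Matrix (Fin n) (Fin n) ℂ := Matrix.of fun k l =>
        if k = l then ((s k * s k : ℝ) : ℂ) else ((-(s k * s l) : ℝ) : ℂ) * u k l with hH
      have hustar : ∀ k l, (starRingEnd ℂ) (u l k) = u k l := by
        intro k l
        by_cases h : M l k = 0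
        · have h2 : M k l = 0 := by rw [hMc k l, h, map_zero]
          simp [hu, h, h2]
        · have h2 : M k l ≠ 0 := by
            intro h3
            rw [hMc l k, h3, map_zero] at h
            exact h rfl
          simp only [hu, if_neg h, if_neg h2]
          rw [map_div₀, Complex.conj_ofReal, ← hMc k l, habs]
      have hunorm : ∀ k l, Complex.normSq (u k l) ≤ 1 := by
        intro k l
        by_cases h : M k l = 0
        · simp [hu, h]
        · simp only [hu, if_neg h]
          rw [Complex.normSq_div, Complex.normSq_ofReal]
          rw [Complex.normSq_eq_norm_sq]
          have hane : ‖(M k l)‖ ≠ 0 := by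
            simpa [norm_eq_zero] using h
          rw [sq, div_self (mul_ne_zero hane hane)]
      have hHmem : H ∈ SOCPConeFull n := by
        refine ⟨?_, ?_, ?_⟩
        · ext k l
          rw [Matrix.conjTranspose_apply]
          by_cases h : k = l
          · subst h
            simp [hH, RingHom.star_def, Complex.conj_ofReal]
          · simp only [hH, Matrix.of_apply, if_neg h, if_neg (Ne.symm h), star_mul',
              Complex.star_def, Complex.conj_ofReal, hustar]
            rw [show s l * s k = s k * s l from mul_comm _ _]
        · intro k
          have hkk : H k k = ((s k * s k : ℝ) : ℂ) := by simp [hH, Matrix.of_apply]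
          rw [hkk, Complex.ofReal_re]
          exact mul_self_nonneg _
        · intro k l hkl
          rw [show H k l = ((-(s k * s l) : ℝ) : ℂ) * u k l from by
            simp [hH, Matrix.of_apply, hkl]]
          rw [show H k k = ((s k * s k : ℝ) : ℂ) from by simp [hH, Matrix.of_apply]]
          rw [show H l l = ((s l * s l : ℝ) : ℂ) from by simp [hH, Matrix.of_apply]]
          rw [Complex.normSq_mul, Complex.normSq_ofReal, Complex.ofReal_re, Complex.ofReal_re]
          have h1 := hunorm k l
          have h2 : (0:ℝ) ≤ Complex.normSq (u k l) := Complex.normSq_nonneg _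
          nlinarith [mul_self_nonneg (s k * s l)]
      have htr : ∀ k l, (H k l * M l k).re = s k * s l * N k l := by
        intro k l
        by_cases h : k = l
        · subst h
          have hkk : H k k = ((s k * s k : ℝ) : ℂ) := by simp [hH, Matrix.of_apply]
          rw [hkk, Complex.re_ofReal_mul]
          simp [hN]
        · simp only [hH, Matrix.of_apply, if_neg h, hN]
          have key : u k l * M l k = ((‖(M k l)‖ : ℝ) : ℂ) := by
            by_cases h2 : M k l = 0
            · have h3 : M l k = 0 := by rw [hMc l k, h2, map_zero]
              simp [hu, h2, h3]
            · simp only [hu, if_neg h2]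
              rw [hMc l k]
              rw [div_mul_eq_mul_div]
              rw [Complex.mul_conj]
              have hane : ‖(M k l)‖ ≠ 0 := by
                simpa [norm_eq_zero] using h2
              rw [Complex.normSq_eq_norm_sq]
              push_cast
              field_simp
          rw [mul_assoc, key, ← Complex.ofReal_mul, Complex.ofReal_re]
          ring
      have h0 := hdual H hHmem
      have htrace : ((H * M).trace).re = ∑ k, ∑ l, (H k l * M l k).re := by
        rw [Matrix.trace]
        rw [Complex.re_sum]
        apply Finset.sum_congr rfl
        intro k _
        rw [Matrix.diag_apply, Matrix.mul_apply, Complex.re_sum]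
      rw [htrace] at h0
      calc (0:ℝ) ≤ ∑ k, ∑ l, (H k l * M l k).re := h0
        _ = ∑ i, ∑ j, s i * s j * N i j := by
            exact Finset.sum_congr rfl fun k _ => Finset.sum_congr rfl fun l _ => htr k l
    obtain ⟨d, hd1, hd2, hd3⟩ := core hn N hsym hz hcop
    set A : Fin n → Fin n → Matrix (Fin 2) (Fin 2) ℂ := fun i j =>
      Matrix.of ![![((d i j : ℝ) : ℂ), M i j],
        ![(starRingEnd ℂ) (M i j), ((d j i : ℝ) : ℂ)]] with hA
    have hApsd : ∀ i j : Fin n, i ≠ j → (A i j).PosSemidef := by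
      intro i j hij
      apply psd2 (d i j) (d j i) (M i j) (hd1 i j) (hd1 j i)
      have : Complex.normSq (M i j) = N i j ^ 2 := by
        rw [Complex.normSq_eq_norm_sq]
        simp only [hN, if_neg hij]
        ring
      rw [this]
      exact hd3 i j hij
    refine ⟨A, fun i j hij => ⟨(hApsd i j hij.ne).1, hApsd i j hij.ne⟩, ?_⟩
    ext k l
    rw [sum_emb2_entry]
    rcases lt_trichotomy k l with hkl | hkl | hkl
    · rw [if_pos hkl]
      simp [hA]
    · subst hkl
      rw [if_neg (lt_irrefl k), if_neg (lt_irrefl k)]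
      have e1 : ∀ j ∈ Finset.univ.filter (fun j : Fin n => k < j),
          A k j 0 0 = ((d k j : ℝ) : ℂ) := by
        intro j _
        simp [hA]
      have e2 : ∀ i ∈ Finset.univ.filter (fun i : Fin n => i < k),
          A i k 1 1 = ((d k i : ℝ) : ℂ) := by
        intro i _
        simp [hA]
      rw [Finset.sum_congr rfl e1, Finset.sum_congr rfl e2]
      rw [← Complex.ofReal_sum, ← Complex.ofReal_sum, ← Complex.ofReal_add]
      have efil1 : Finset.univ.filter (fun j : Fin n => k < j)
          = (Finset.univ.erase k).filter (fun j => k < j) := by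
        ext j
        simp only [Finset.mem_filter, Finset.mem_erase, Finset.mem_univ, true_and, and_true]
        exact ⟨fun h => ⟨h.ne', h⟩, fun h => h.2⟩
      have efil2 : Finset.univ.filter (fun j : Fin n => j < k)
          = (Finset.univ.erase k).filter (fun j => ¬ k < j) := by
        ext j
        simp only [Finset.mem_filter, Finset.mem_erase, Finset.mem_univ, true_and, and_true]
        constructor
        · exact fun h => ⟨h.ne, not_lt_of_gt h⟩
        · exact fun h => lt_of_le_of_ne (le_of_not_gt h.2) h.1
      have esum : (∑ j ∈ Finset.univ.filter (fun j : Fin n => k < j), d k j)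
          + (∑ i ∈ Finset.univ.filter (fun i : Fin n => i < k), d k i)
          = ∑ j ∈ Finset.univ.erase k, d k j := by
        rw [efil1, efil2]
        exact Finset.sum_filter_add_sum_filter_not _ _ _
      rw [esum, hd2 k]
      have : N k k = (M k k).re := by simp [hN]
      rw [this]
      exact (Complex.conj_eq_iff_re.mp (by simpa [RingHom.star_def] using hM.apply k k)).symm
    · rw [if_neg (lt_asymm hkl), if_pos hkl]
      simp only [hA, Matrix.of_apply]
      rw [show (M : Matrix (Fin n) (Fin n) ℂ) k l = (starRingEnd ℂ) (M l k) from hMc k l]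
      simp
  · rintro ⟨A, hA, hsum⟩ H hH
    obtain ⟨hHh, hHd, hHo⟩ := hH
    rw [hsum, Finset.mul_sum, Matrix.trace_sum, Complex.re_sum]
    apply Finset.sum_nonneg
    rintro ⟨i, j⟩ hp
    have hij : i < j := (Finset.mem_filter.mp hp).2
    obtain ⟨ha, hb, hdet, h10, h00, h11⟩ := psd2_inv (hA i j hij).2
    have hdr : ∀ k, H k k = ((H k k).re : ℂ) := by
      intro k
      exact (Complex.conj_eq_iff_re.mp (by simpa [RingHom.star_def] using hHh.apply k k)).symm
    have hji : H j i = (starRingEnd ℂ) (H i j) := by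
      rw [← hHh.apply j i]; simp [RingHom.star_def]
    rw [trace_mul_emb2, h00, h11, h10, hdr i, hdr j, hji]
    simp only [Complex.add_re, Complex.mul_re, Complex.ofReal_re, Complex.ofReal_im,
      Complex.conj_re, Complex.conj_im, Complex.mul_im, zero_mul, mul_zero, sub_zero,
      zero_sub, neg_neg, neg_zero, add_zero, zero_add]
    have hno := hHo i j hij.ne
    have hnormH : (H i j).re^2 + (H i j).im^2 ≤ (H i i).re * (H j j).re := by
      rw [Complex.normSq_apply] at hno; nlinarith [hno]
    have hnormA : (A i j 0 1).re^2 + (A i j 0 1).im^2 ≤ (A i j 0 0).re * (A i j 1 1).re := by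
      rw [Complex.normSq_apply] at hdet; nlinarith [hdet]
    have key1 : ((A i j 0 1).re^2 + (A i j 0 1).im^2) * ((H i j).re^2 + (H i j).im^2)
        ≤ ((A i j 0 0).re * (A i j 1 1).re) * ((H i i).re * (H j j).re) := by
      apply mul_le_mul hnormA hnormH (by positivity) (mul_nonneg ha hb)
    nlinarith [key1, sq_nonneg ((A i j 0 1).re*(H i j).im - (A i j 0 1).im*(H i j).re),
      sq_nonneg ((A i j 0 0).re*(H i i).re - (A i j 1 1).re*(H j j).re),
      sq_nonneg ((A i j 0 0).re*(H i i).re + (A i j 1 1).re*(H j j).re),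
      mul_nonneg ha (hHd i), mul_nonneg hb (hHd j),
      mul_nonneg (mul_nonneg ha (hHd i)) (mul_nonneg hb (hHd j)),
      sq_nonneg ((A i j 0 1).re*(H i j).re + (A i j 0 1).im*(H i j).im)]
end

section
/- The dual cone of the real parabolic cone on the complete graph is the cone of diagonally dominant matrices: for n ≥ 2, let C3 be the set of n×n real symmetric matrices H with H_ii ≥ 0 for all i and H_ii + H_jj ≥ 2|H_ij| for all i ≠ j. Then an n×n real symmetric matrix M satisfies tr(H M) ≥ 0 for all H ∈ C3 if and only if M_ii ≥ Σ_{j ≠ i} |M_ij| for every i ∈ {1,…,n}. -/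
open Matrix Finset

lemma swap_sum_erase {n : ℕ} (f : Fin n → Fin n → ℝ) :
    ∑ i, ∑ j ∈ univ.erase i, f i j = ∑ i, ∑ j ∈ univ.erase i, f j i := by
  rw [Finset.sum_comm' (s := univ) (t := fun i => univ.erase i) (t' := univ)
    (s' := fun j => univ.erase j)]
  intro i j
  simp [eq_comm, ne_comm]

/-- The real parabolic cone on the complete graph: real symmetric `H` with nonnegative
diagonal and `H_ii + H_jj ≥ 2|H_ij|` for all `i ≠ j`. -/
def ParabolicConeFullR (n : ℕ) : Set (Matrix (Fin n) (Fin n) ℝ) :=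
  {H | H.IsSymm ∧ (∀ i, 0 ≤ H i i) ∧ ∀ i j, i ≠ j → 2 * |H i j| ≤ H i i + H j j}

/-- The dual cone of the real parabolic cone on the complete graph is the cone of
diagonally dominant matrices with nonnegative diagonal. -/
theorem dualCone_ParabolicConeFullR (n : ℕ) (hn : 2 ≤ n)
    (M : Matrix (Fin n) (Fin n) ℝ) (hM : M.IsSymm) :
    (∀ H ∈ ParabolicConeFullR n, 0 ≤ (H * M).trace) ↔
      ∀ i : Fin n, ∑ j ∈ Finset.univ.erase i, |M i j| ≤ M i i := by
  have hMsym : ∀ p q, M q p = M p q := fun p q => hM.apply p q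
  have trace_eq : ∀ H : Matrix (Fin n) (Fin n) ℝ,
      (H * M).trace = ∑ p, ∑ q, H p q * M p q := by
    intro H
    simp only [Matrix.trace, Matrix.mul_apply, Matrix.diag]
    exact Finset.sum_congr rfl fun p _ => Finset.sum_congr rfl fun q _ => by rw [hMsym]
  constructor
  · intro h i
    set s : Fin n → ℝ := fun j => if 0 ≤ M i j then -(1/2) else (1/2) with hs
    set H : Matrix (Fin n) (Fin n) ℝ := fun p q =>
      if p = i then (if q = i then 1 else s q) else (if q = i then s p else 0) with hH
    have hsabs : ∀ j, |s j| = 1/2 := by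
      intro j; simp only [hs]; split <;> norm_num
    have hsmul : ∀ j, s j * M i j = -(|M i j| / 2) := by
      intro j
      by_cases h' : 0 ≤ M i j
      · simp only [hs, if_pos h', abs_of_nonneg h']; ring
      · simp only [hs, if_neg h', abs_of_neg (lt_of_not_ge h')]; ring
    have hcone : H ∈ ParabolicConeFullR n := by
      refine ⟨?_, ?_, ?_⟩
      · ext p q
        rw [Matrix.transpose_apply]; simp only [hH]
        by_cases hp : p = i <;> by_cases hq : q = i <;> simp [hp, hq]
      · intro j
        by_cases hj : j = i <;> simp [hH, hj]
      · intro p q hpq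
        by_cases hp : p = i <;> by_cases hq : q = i
        · exact absurd (hp.trans hq.symm) hpq
        · simp [hH, hp, hq, hsabs]
        · simp [hH, hp, hq, hsabs]
        · simp [hH, hp, hq]
    have key : (H * M).trace = M i i - ∑ j ∈ univ.erase i, |M i j| := by
      rw [trace_eq]
      have outer : ∀ p, ∑ q, H p q * M p q =
          if p = i then (M i i - (∑ j ∈ univ.erase i, |M i j|) / 2)
          else -(|M i p| / 2) := by
        intro p
        by_cases hp : p = i
        · subst hp
          rw [if_pos rfl, ← Finset.sum_erase_add _ _ (Finset.mem_univ p)]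
          have e1 : ∑ q ∈ univ.erase p, H p q * M p q
              = ∑ q ∈ univ.erase p, -(|M p q| / 2) := by
            refine Finset.sum_congr rfl fun q hq => ?_
            have hq' : q ≠ p := Finset.ne_of_mem_erase hq
            simp only [hH, if_pos rfl, if_neg hq']
            exact hsmul q
          rw [e1, Finset.sum_neg_distrib, ← Finset.sum_div]
          have hpp : H p p = 1 := by simp [hH]
          rw [hpp]; ring
        · rw [if_neg hp, ← Finset.sum_erase_add _ _ (Finset.mem_univ i)]
          have e1 : ∑ q ∈ univ.erase i, H p q * M p q = 0 := by
            refine Finset.sum_eq_zero fun q hq => ?_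
            have hq' : q ≠ i := Finset.ne_of_mem_erase hq
            simp [hH, hp, hq']
          rw [e1, zero_add]
          simp only [hH, if_neg hp, if_pos rfl]
          rw [hMsym]
          exact hsmul p
      simp only [outer]
      rw [← Finset.sum_erase_add _ _ (Finset.mem_univ i), if_pos rfl]
      have e2 : ∑ p ∈ univ.erase i, (if p = i then (M i i - (∑ j ∈ univ.erase i, |M i j|) / 2)
          else -(|M i p| / 2)) = -((∑ j ∈ univ.erase i, |M i j|) / 2) := by
        rw [Finset.sum_congr rfl fun p hp => if_neg (Finset.ne_of_mem_erase hp)]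
        rw [Finset.sum_neg_distrib, ← Finset.sum_div]
      rw [e2]; ring
    have := h H hcone
    rw [key] at this
    linarith
  · rintro hdd H ⟨hHs, hHdiag, hHoff⟩
    rw [trace_eq]
    have step1 : ∀ p : Fin n, ∀ q ∈ univ.erase p,
        -((H p p + H q q) / 2 * |M p q|) ≤ H p q * M p q := by
      intro p q hq
      have hq' : q ≠ p := Finset.ne_of_mem_erase hq
      have h2 := hHoff p q (Ne.symm hq')
      have h1 : |H p q * M p q| ≤ (H p p + H q q) / 2 * |M p q| := by
        rw [abs_mul]
        have habs : 0 ≤ |M p q| := abs_nonneg _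
        nlinarith [abs_nonneg (H p q)]
      linarith [neg_abs_le (H p q * M p q)]
    have sw : ∑ p, ∑ q ∈ univ.erase p, H q q / 2 * |M p q|
        = ∑ p, ∑ q ∈ univ.erase p, H p p / 2 * |M p q| := by
      rw [swap_sum_erase (fun p q => H q q / 2 * |M p q|)]
      exact Finset.sum_congr rfl fun p _ => Finset.sum_congr rfl fun q _ => by
        rw [hMsym]
    have expand : ∑ p, ∑ q ∈ univ.erase p, ((H p p + H q q) / 2 * |M p q|)
        = ∑ p, ∑ q ∈ univ.erase p, H p p * |M p q| := by
      have e3 : ∑ p, ∑ q ∈ univ.erase p, ((H p p + H q q) / 2 * |M p q|)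
          = ∑ p, ∑ q ∈ univ.erase p, (H p p / 2 * |M p q| + H q q / 2 * |M p q|) := by
        refine Finset.sum_congr rfl fun p _ => Finset.sum_congr rfl fun q _ => by ring
      rw [e3]
      simp only [Finset.sum_add_distrib]
      rw [sw, ← Finset.sum_add_distrib]
      simp only [← Finset.sum_add_distrib]
      refine Finset.sum_congr rfl fun p _ => Finset.sum_congr rfl fun q _ => by ring
    have lower : ∑ p, (H p p * M p p - ∑ q ∈ univ.erase p, ((H p p + H q q) / 2 * |M p q|))
        ≤ ∑ p, ∑ q, H p q * M p q := by
      refine Finset.sum_le_sum fun p _ => ?_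
      rw [← Finset.sum_erase_add _ _ (Finset.mem_univ p)]
      have := Finset.sum_le_sum (step1 p)
      rw [Finset.sum_neg_distrib] at this
      linarith
    refine le_trans ?_ lower
    rw [Finset.sum_sub_distrib, expand]
    rw [← Finset.sum_sub_distrib]
    refine Finset.sum_nonneg fun p _ => ?_
    rw [← Finset.mul_sum, ← mul_sub]
    exact mul_nonneg (hHdiag p) (by linarith [hdd p])
end
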